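/- arXiv:1209.4110 — 3 statements merged into one kernel-verified Lean document; each statement's English description precedes it below -/
import Mathlib

section
/- For every nonnegative integer n, the Zagier polynomial evaluated at -3/2 vanishes in odd degree: B*_{2n+1}(-3/2) = 0. -/
open Finset Polynomial

/-- The Zagier polynomials, evaluated at a real number. -/
noncomputable def zagierBstarPoly (n : ℕ) (x : ℝ) : ℝ :=
  ∑ r ∈ Finset.range (n + 1),
    ((n + r).choose (2 * r) : ℝ) * (Polynomial.aeval x (Polynomial.bernoulli r)) / (n + r)

/-- Real evaluation of Bernoulli polynomials. -/
noncomputable def rbern (r : ℕ) (x : ℝ) : ℝ := Polynomial.aeval x (Polynomial.bernoulli r)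

/-- The auxiliary "Chebyshev-U like" sums. -/
noncomputable def zg (m : ℕ) (x : ℝ) : ℝ :=
  ∑ k ∈ Finset.range m, ((m + k).choose (2 * k + 1) : ℝ) * x ^ k

lemma rbern_add_one (r : ℕ) (x : ℝ) :
    rbern r (x + 1) = rbern r x + r * x ^ (r - 1) := by
  have hpoly : (Polynomial.bernoulli r).comp (X + 1) =
      Polynomial.bernoulli r + Polynomial.C (r : ℚ) * X ^ (r - 1) := by
    apply Polynomial.funext
    intro q
    rw [eval_comp]
    simp only [eval_add, eval_X, eval_one, eval_mul, eval_C, eval_pow]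
    rw [add_comm q 1, Polynomial.bernoulli_eval_one_add]
  have := congrArg (Polynomial.aeval x) hpoly
  rw [Polynomial.aeval_comp] at this
  simp only [map_add, map_mul, map_pow, aeval_X, aeval_C, map_one] at this
  simpa [rbern, Algebra.algebraMap_self] using this

lemma key_div (m k : ℕ) :
    ((m + k + 1).choose (2 * k + 2) : ℝ) * (k + 1) / (m + k + 1)
      = ((m + k).choose (2 * k + 1) : ℝ) / 2 := by
  have h := Nat.add_one_mul_choose_eq (m + k) (2 * k + 1)
  have h' : ((m + k + 1 : ℕ) : ℝ) * ((m + k).choose (2 * k + 1) : ℝ)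
      = ((m + k + 1).choose (2 * k + 2) : ℝ) * (2 * k + 2 : ℕ) := by
    exact_mod_cast congrArg (Nat.cast : ℕ → ℝ) h
  have hne : ((m : ℝ) + k + 1) ≠ 0 := by positivity
  push_cast at h'
  field_simp
  nlinarith [h']

lemma zagier_step (m : ℕ) (hm : 1 ≤ m) (x : ℝ) :
    zagierBstarPoly m (x + 1) - zagierBstarPoly m x = (1 / 2) * zg m x := by
  unfold zagierBstarPoly zg
  rw [← Finset.sum_sub_distrib]
  have hterm : ∀ r ∈ Finset.range (m + 1),
      ((m + r).choose (2 * r) : ℝ) * (Polynomial.aeval (x+1) (Polynomial.bernoulli r)) / (m + r)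
        - ((m + r).choose (2 * r) : ℝ) * (Polynomial.aeval x (Polynomial.bernoulli r)) / (m + r)
      = ((m + r).choose (2 * r) : ℝ) * (r * x ^ (r - 1)) / (m + r) := by
    intro r _
    have h := rbern_add_one r x
    simp only [rbern] at h
    rw [h]
    ring
  rw [Finset.sum_congr rfl hterm, Finset.sum_range_succ']
  simp only [Nat.cast_zero, zero_mul, mul_zero, zero_div, add_zero]
  rw [Finset.mul_sum]
  apply Finset.sum_congr rfl
  intro k _
  have h2 : 2 * (k + 1) = 2 * k + 2 := by ring
  have h3 : m + (k + 1) = m + k + 1 := by ring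
  rw [h2, h3]
  simp only [Nat.add_sub_cancel]
  have expand : ((m + k + 1).choose (2 * k + 2) : ℝ) * (((k + 1 : ℕ) : ℝ) * x ^ k) / ((m : ℝ) + ((k + 1 : ℕ) : ℝ))
      = (((m + k + 1).choose (2 * k + 2) : ℝ) * (k + 1) / (m + k + 1)) * x ^ k := by
    push_cast
    ring
  rw [expand, key_div]
  ring

lemma pascal2 (n i : ℕ) :
    (n + 2).choose (i + 2) + n.choose (i + 2)
      = 2 * (n + 1).choose (i + 2) + n.choose i := by
  have h1 : (n + 2).choose (i + 2) = (n+1).choose (i+1) + (n+1).choose (i+2) :=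
    Nat.choose_succ_succ' (n+1) (i+1)
  have h2 : (n + 1).choose (i + 1) = n.choose i + n.choose (i+1) :=
    Nat.choose_succ_succ' n i
  have h3 : (n + 1).choose (i + 2) = n.choose (i+1) + n.choose (i+2) :=
    Nat.choose_succ_succ' n (i+1)
  omega

lemma zg_rec (m : ℕ) (x : ℝ) : zg (m + 2) x = (2 + x) * zg (m + 1) x - zg m x := by
  have hb_ext : zg (m+1) x = ∑ k ∈ Finset.range (m+2), ((m + 1 + k).choose (2 * k + 1) : ℝ) * x ^ k := by
    unfold zg
    rw [Finset.sum_range_succ (fun k => ((m + 1 + k).choose (2 * k + 1) : ℝ) * x ^ k) (m+1),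
      Nat.choose_eq_zero_of_lt (show m+1+(m+1) < 2*(m+1)+1 by omega)]
    simp
  have hc_ext : zg m x = ∑ k ∈ Finset.range (m+2), ((m + k).choose (2 * k + 1) : ℝ) * x ^ k := by
    unfold zg
    rw [Finset.sum_range_succ (fun k => ((m + k).choose (2 * k + 1) : ℝ) * x ^ k) (m+1),
      Finset.sum_range_succ (fun k => ((m + k).choose (2 * k + 1) : ℝ) * x ^ k) m,
      Nat.choose_eq_zero_of_lt (show m+(m+1) < 2*(m+1)+1 by omega),
      Nat.choose_eq_zero_of_lt (show m+m < 2*m+1 by omega)]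
    simp
  have E1 : zg (m+2) x = (∑ k ∈ Finset.range (m+1),
      ((m + 2 + (k+1)).choose (2 * (k+1) + 1) : ℝ) * x ^ (k+1)) + (m+2 : ℕ) := by
    unfold zg
    rw [Finset.sum_range_succ' (fun k => ((m + 2 + k).choose (2 * k + 1) : ℝ) * x ^ k) (m+1)]
    simp
  have E2 : zg (m+1) x = (∑ k ∈ Finset.range (m+1),
      ((m + 1 + (k+1)).choose (2 * (k+1) + 1) : ℝ) * x ^ (k+1)) + (m+1 : ℕ) := by
    rw [hb_ext, Finset.sum_range_succ' (fun k => ((m + 1 + k).choose (2 * k + 1) : ℝ) * x ^ k) (m+1)]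
    simp
  have E4 : zg m x = (∑ k ∈ Finset.range (m+1),
      ((m + (k+1)).choose (2 * (k+1) + 1) : ℝ) * x ^ (k+1)) + (m : ℕ) := by
    rw [hc_ext, Finset.sum_range_succ' (fun k => ((m + k).choose (2 * k + 1) : ℝ) * x ^ k) (m+1)]
    simp
  have E3 : x * zg (m+1) x = ∑ k ∈ Finset.range (m+1),
      ((m + 1 + k).choose (2 * k + 1) : ℝ) * x ^ (k+1) := by
    unfold zg
    rw [Finset.mul_sum]
    apply Finset.sum_congr rfl
    intro k _
    ring
  have expand : (2 + x) * zg (m+1) x = 2 * zg (m+1) x + x * zg (m+1) x := by ring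
  rw [expand, E3, E1, E4, E2]
  have key : ∀ k ∈ Finset.range (m+1),
      ((m + 2 + (k+1)).choose (2 * (k+1) + 1) : ℝ) * x ^ (k+1)
      = 2 * (((m + 1 + (k+1)).choose (2 * (k+1) + 1) : ℝ) * x ^ (k+1))
        + ((m + 1 + k).choose (2 * k + 1) : ℝ) * x ^ (k+1)
        - ((m + (k+1)).choose (2 * (k+1) + 1) : ℝ) * x ^ (k+1) := by
    intro k _
    have hp := pascal2 (m + k + 1) (2 * k + 1)
    have hc : ((m + k + 1 + 2).choose (2 * k + 1 + 2) : ℝ) + ((m + k + 1).choose (2 * k + 1 + 2) : ℝ)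
        = 2 * ((m + k + 1 + 1).choose (2 * k + 1 + 2) : ℝ) + ((m + k + 1).choose (2 * k + 1) : ℝ) := by
      exact_mod_cast congrArg (Nat.cast : ℕ → ℝ) hp
    have e1 : m + 2 + (k+1) = m + k + 1 + 2 := by ring
    have e2 : 2 * (k+1) + 1 = 2 * k + 1 + 2 := by ring
    have e3 : m + 1 + (k+1) = m + k + 1 + 1 := by ring
    have e4 : m + (k+1) = m + k + 1 := by ring
    have e5 : m + 1 + k = m + k + 1 := by ring
    rw [e1, e2, e3, e4, e5]
    linear_combination hc * x ^ (k + 1)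
  rw [Finset.sum_congr rfl key, Finset.sum_sub_distrib, Finset.sum_add_distrib,
    ← Finset.mul_sum]
  push_cast
  ring

lemma zg_symm (m : ℕ) (x : ℝ) : zg m (-4 - x) = (-1) ^ (m + 1) * zg m x := by
  induction m using Nat.strong_induction_on generalizing x with
  | _ m ih =>
    match m with
    | 0 => simp [zg]
    | 1 => norm_num [zg]
    | (m + 2) =>
      rw [zg_rec, zg_rec, ih (m+1) (by omega), ih m (by omega),
        show m + 1 + 1 = m + 2 by ring, show m + 2 + 1 = m + 3 by ring,
        show m + 3 = (m + 1) + 2 by ring, show m + 2 = (m + 1) + 1 by ring,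
        pow_succ, pow_succ, pow_succ]
      ring

/-- The Zagier polynomial as an actual real polynomial. -/
noncomputable def ZP (m : ℕ) : Polynomial ℝ :=
  ∑ r ∈ Finset.range (m + 1),
    Polynomial.C (((m + r).choose (2 * r) : ℝ) / (m + r)) *
      ((Polynomial.bernoulli r).map (algebraMap ℚ ℝ))

lemma ZP_eval (m : ℕ) (x : ℝ) : (ZP m).eval x = zagierBstarPoly m x := by
  unfold ZP zagierBstarPoly
  rw [Polynomial.eval_finset_sum]
  apply Finset.sum_congr rfl
  intro r _
  rw [Polynomial.eval_mul, Polynomial.eval_C, Polynomial.eval_map]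
  rw [show Polynomial.aeval x (Polynomial.bernoulli r)
      = Polynomial.eval₂ (algebraMap ℚ ℝ) x (Polynomial.bernoulli r) from rfl,
    Polynomial.eval₂_eq_eval_map]
  ring

/-- The reflected-sum polynomial. -/
noncomputable def ZQ (m : ℕ) : Polynomial ℝ :=
  ZP m + (ZP m).comp (Polynomial.C (-3) - Polynomial.X)

lemma ZQ_eval (m : ℕ) (x : ℝ) :
    (ZQ m).eval x = zagierBstarPoly m x + zagierBstarPoly m (-3 - x) := by
  unfold ZQ
  rw [Polynomial.eval_add, Polynomial.eval_comp]
  simp [ZP_eval]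

lemma ZQ_const (n : ℕ) (x : ℝ) :
    zagierBstarPoly (2*n+1) x + zagierBstarPoly (2*n+1) (-3 - x) = (ZQ (2*n+1)).eval 0 := by
  set m := 2*n+1 with hm
  -- periodicity of the evaluation
  have hper : ∀ y : ℝ, (ZQ m).eval (y + 1) = (ZQ m).eval y := by
    intro y
    rw [ZQ_eval, ZQ_eval]
    have h1 : zagierBstarPoly m (y + 1) - zagierBstarPoly m y = (1/2) * zg m y :=
      zagier_step m (by omega) y
    have h2 : zagierBstarPoly m ((-4 - y) + 1) - zagierBstarPoly m (-4 - y)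
        = (1/2) * zg m (-4 - y) := zagier_step m (by omega) (-4 - y)
    have h3 : zg m (-4 - y) = zg m y := by
      rw [zg_symm m y, hm]
      rw [show 2*n+1+1 = 2*(n+1) from by ring, pow_mul]
      norm_num
    have e1 : (-3 : ℝ) - (y + 1) = -4 - y := by ring
    have e2 : (-3 : ℝ) - y = (-4 - y) + 1 := by ring
    rw [e1, e2]
    rw [h3] at h2
    linarith [h1, h2]
  -- hence the polynomial is invariant under X ↦ X + 1
  have hcomp : (ZQ m).comp (Polynomial.X + Polynomial.C 1) = ZQ m := by
    apply Polynomial.funext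
    intro y
    rw [Polynomial.eval_comp]
    simp [hper y]
  -- equal values at all naturals
  have hnat : ∀ N : ℕ, (ZQ m).eval (N : ℝ) = (ZQ m).eval 0 := by
    intro N
    induction N with
    | zero => norm_num
    | succ k ihk =>
      have : (ZQ m).eval ((k : ℝ) + 1) = (ZQ m).eval (k : ℝ) := by
        conv_rhs => rw [← hcomp]
        rw [Polynomial.eval_comp]
        simp
      push_cast
      rw [this, ihk]
  -- so ZQ m is constant
  have hconst : ZQ m = Polynomial.C ((ZQ m).eval 0) := by
    have hzero : ZQ m - Polynomial.C ((ZQ m).eval 0) = 0 := by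
      apply Polynomial.eq_zero_of_infinite_isRoot
      apply Set.infinite_of_injective_forall_mem (f := fun N : ℕ => (N : ℝ))
      · exact fun a b hab => Nat.cast_injective hab
      · intro N
        simp only [Set.mem_setOf_eq, Polynomial.IsRoot, Polynomial.eval_sub,
          Polynomial.eval_C]
        rw [hnat N, sub_self]
    exact sub_eq_zero.mp hzero
  rw [← ZQ_eval, hconst]
  simp

lemma continuous_rbern (r : ℕ) : Continuous (rbern r) := by
  unfold rbern
  exact Polynomial.continuous_aeval (Polynomial.bernoulli r)

lemma continuous_zagier (m : ℕ) : Continuous (zagierBstarPoly m) := by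
  have h : zagierBstarPoly m = fun x => (ZP m).eval x :=
    funext fun x => (ZP_eval m x).symm
  rw [h]
  exact (ZP m).continuous

lemma integral_rbern (r : ℕ) : ∫ x in (-2 : ℝ)..(-1), rbern r x = (-2 : ℝ) ^ r := by
  have hder : ∀ y ∈ Set.uIcc (-2 : ℝ) (-1), HasDerivAt
      (fun x => rbern (r+1) x / (r+1)) (rbern r y) y := by
    intro y _
    have h1 : HasDerivAt (fun x => rbern (r+1) x)
        (Polynomial.aeval y (Polynomial.derivative (Polynomial.bernoulli (r+1)))) y :=
      (Polynomial.bernoulli (r+1)).hasDerivAt_aeval y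
    have h2 : Polynomial.aeval y (Polynomial.derivative (Polynomial.bernoulli (r+1)))
        = (r + 1 : ℝ) * rbern r y := by
      rw [Polynomial.derivative_bernoulli_add_one]
      rw [map_mul]
      congr 1
      · push_cast
        simp
    have h3 := h1.div_const (r + 1 : ℝ)
    rw [h2] at h3
    have hne : (r + 1 : ℝ) ≠ 0 := by positivity
    simpa [mul_div_assoc, mul_div_cancel_left₀ _ hne] using h3
  have hint : IntervalIntegrable (rbern r) MeasureTheory.volume (-2) (-1) :=
    (continuous_rbern r).intervalIntegrable _ _
  rw [intervalIntegral.integral_eq_sub_of_hasDerivAt hder hint]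
  have hshift := rbern_add_one (r+1) (-2 : ℝ)
  rw [show (-2 : ℝ) + 1 = -1 by norm_num, Nat.add_sub_cancel] at hshift
  rw [hshift]
  push_cast
  field_simp
  ring

lemma integral_zagier (m : ℕ) : ∫ x in (-2 : ℝ)..(-1), zagierBstarPoly m x
    = ∑ r ∈ Finset.range (m + 1), ((m + r).choose (2 * r) : ℝ) * (-2 : ℝ) ^ r / (m + r) := by
  unfold zagierBstarPoly
  rw [intervalIntegral.integral_finset_sum]
  · apply Finset.sum_congr rfl
    intro r _
    have : ∀ x : ℝ, ((m + r).choose (2 * r) : ℝ) * (Polynomial.aeval x (Polynomial.bernoulli r)) / (m + r)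
        = (((m + r).choose (2 * r) : ℝ) / (m + r)) * rbern r x := by
      intro x; unfold rbern; ring
    simp_rw [this]
    rw [intervalIntegral.integral_const_mul, integral_rbern]
    ring
  · intro r _
    apply Continuous.intervalIntegrable
    have : Continuous (rbern r) := continuous_rbern r
    continuity

lemma sum_neg_two (m : ℕ) (hm : 1 ≤ m) :
    (m : ℝ) * ∑ r ∈ Finset.range (m+1), ((m + r).choose (2 * r) : ℝ) * (-2 : ℝ)^r / (m + r)
      = zg (m+1) (-2) := by
  rw [Finset.mul_sum]
  have hterm : ∀ r ∈ Finset.range (m+1),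
      (m : ℝ) * (((m + r).choose (2 * r) : ℝ) * (-2 : ℝ)^r / (m + r))
      = ((m + r).choose (2 * r) : ℝ) * (-2 : ℝ)^r
        - (r : ℝ) * (((m + r).choose (2 * r) : ℝ) * (-2 : ℝ)^r / (m + r)) := by
    intro r _
    have hne : ((m : ℝ) + r) ≠ 0 := by
      have : (1 : ℝ) ≤ (m : ℝ) := by exact_mod_cast hm
      positivity
    field_simp
    ring
  rw [Finset.sum_congr rfl hterm, Finset.sum_sub_distrib]
  have hT : ∑ r ∈ Finset.range (m+1),
      (r : ℝ) * (((m + r).choose (2 * r) : ℝ) * (-2 : ℝ)^r / (m + r))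
      = - ∑ k ∈ Finset.range (m+1), ((m + k).choose (2 * k + 1) : ℝ) * (-2 : ℝ)^k := by
    rw [Finset.sum_range_succ'
      (fun r => (r : ℝ) * (((m + r).choose (2 * r) : ℝ) * (-2 : ℝ)^r / (m + r))) m]
    have htop : ∑ k ∈ Finset.range (m+1), ((m + k).choose (2 * k + 1) : ℝ) * (-2 : ℝ)^k
        = ∑ k ∈ Finset.range m, ((m + k).choose (2 * k + 1) : ℝ) * (-2 : ℝ)^k := by
      rw [Finset.sum_range_succ, Nat.choose_eq_zero_of_lt (show m + m < 2*m+1 by omega)]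
      simp
    rw [htop]
    simp only [Nat.cast_zero, zero_mul, add_zero]
    rw [← Finset.sum_neg_distrib]
    apply Finset.sum_congr rfl
    intro k _
    have hd := key_div m k
    have e2 : 2 * (k+1) = 2*k+2 := by ring
    have e3 : m + (k+1) = m + k + 1 := by ring
    rw [e2, e3]
    have expand : ((k+1 : ℕ) : ℝ) * (((m + k + 1).choose (2*k+2) : ℝ) * (-2 : ℝ)^(k+1) / ((m : ℝ) + ((k+1 : ℕ) : ℝ)))
        = (((m + k + 1).choose (2*k+2) : ℝ) * (k+1) / (m + k + 1)) * (-2 : ℝ)^(k+1) := by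
      push_cast
      ring
    rw [expand, hd, pow_succ]
    ring
  rw [hT, sub_neg_eq_add, ← Finset.sum_add_distrib]
  unfold zg
  apply Finset.sum_congr rfl
  intro r _
  have hp : ((m + 1 + r).choose (2 * r + 1) : ℕ) = (m + r).choose (2 * r) + (m + r).choose (2 * r + 1) := by
    rw [show m + 1 + r = (m + r) + 1 by ring]
    exact Nat.choose_succ_succ' (m + r) (2 * r)
  rw [hp]
  push_cast
  ring

lemma zg_neg_two_zero (n : ℕ) : zg (2*n+2) (-2) = 0 := by
  have h := zg_symm (2*n+2) (-2)
  rw [show (-4 : ℝ) - (-2) = -2 by norm_num] at h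
  rw [show 2*n+2+1 = 2*(n+1)+1 by ring, pow_succ, pow_mul] at h
  norm_num at h
  linarith

theorem zagierBstarPoly_odd_at_neg_three_halves (n : ℕ) :
    zagierBstarPoly (2 * n + 1) (-3 / 2) = 0 := by
  set m := 2 * n + 1 with hm
  set c := (ZQ m).eval 0 with hc
  have hfun : ∀ x : ℝ, zagierBstarPoly m x + zagierBstarPoly m (-3 - x) = c :=
    fun x => ZQ_const n x
  -- evaluate the constant by integrating over [-2, -1]
  have hcont : Continuous (zagierBstarPoly m) := continuous_zagier m
  have hint1 : IntervalIntegrable (fun x => zagierBstarPoly m x)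
      MeasureTheory.volume (-2) (-1) := hcont.intervalIntegrable _ _
  have hint2 : IntervalIntegrable (fun x => zagierBstarPoly m (-3 - x))
      MeasureTheory.volume (-2) (-1) := by
    apply Continuous.intervalIntegrable
    exact hcont.comp (by continuity)
  have hIc : (∫ x in (-2 : ℝ)..(-1), (zagierBstarPoly m x + zagierBstarPoly m (-3 - x))) = c := by
    have : (fun x => zagierBstarPoly m x + zagierBstarPoly m (-3 - x)) = fun _ : ℝ => c :=
      funext hfun
    rw [intervalIntegral.integral_congr (g := fun _ : ℝ => c) (fun x _ => hfun x)]
    rw [intervalIntegral.integral_const]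
    norm_num
  have hsplit : (∫ x in (-2 : ℝ)..(-1), (zagierBstarPoly m x + zagierBstarPoly m (-3 - x)))
      = (∫ x in (-2 : ℝ)..(-1), zagierBstarPoly m x)
        + ∫ x in (-2 : ℝ)..(-1), zagierBstarPoly m (-3 - x) := by
    exact intervalIntegral.integral_add hint1 hint2
  have hrefl : (∫ x in (-2 : ℝ)..(-1), zagierBstarPoly m (-3 - x))
      = ∫ x in (-2 : ℝ)..(-1), zagierBstarPoly m x := by
    rw [intervalIntegral.integral_comp_sub_left (zagierBstarPoly m) (-3)]
    norm_num
  have hval : (∫ x in (-2 : ℝ)..(-1), zagierBstarPoly m x) = 0 := by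
    rw [integral_zagier m]
    have hzg : zg (m+1) (-2) = 0 := by
      rw [hm, show 2*n+1+1 = 2*n+2 by ring]
      exact zg_neg_two_zero n
    have hmul := sum_neg_two m (by omega)
    rw [hzg] at hmul
    have hmne : (m : ℝ) ≠ 0 := Nat.cast_ne_zero.mpr (by omega)
    exact (mul_eq_zero.mp hmul).resolve_left hmne
  have hc0 : c = 0 := by
    rw [← hIc, hsplit, hrefl, hval]
    norm_num
  have := hfun (-3/2 : ℝ)
  rw [show (-3 : ℝ) - (-3/2) = -3/2 by norm_num, hc0] at this
  linarith
end

section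
/- For every nonnegative integer n, B*_{2n+1}(-2) = (-1)^{n+1}/4; in particular the sequence B*_{2n+1}(-2) is periodic with period 2. -/
open Finset Polynomial

noncomputable def Pz (m : ℕ) : Polynomial ℝ :=
  ∑ s ∈ Finset.range m, Polynomial.C (((m + s).choose (2 * s + 1) : ℝ)) * Polynomial.X ^ s

lemma coeff_Pz (m j : ℕ) : (Pz m).coeff j = (((m + j).choose (2 * j + 1) : ℝ)) := by
  rw [Pz, Polynomial.finset_sum_coeff]
  simp only [Polynomial.coeff_C_mul, Polynomial.coeff_X_pow, mul_ite, mul_one, mul_zero]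
  rw [Finset.sum_ite_eq (Finset.range m) j (fun s => (((m + s).choose (2 * s + 1) : ℝ)))]
  simp only [Finset.mem_range]
  split_ifs with h
  · rfl
  · rw [Nat.choose_eq_zero_of_lt (by omega)]
    norm_num

lemma Pz_rec (m : ℕ) :
    Pz (m + 2) = (Polynomial.X + Polynomial.C 2) * Pz (m + 1) - Pz m := by
  ext j
  rw [Polynomial.coeff_sub, add_mul, Polynomial.coeff_add, Polynomial.coeff_C_mul]
  rcases j with _ | j
  · rw [Polynomial.coeff_X_mul_zero]
    simp only [coeff_Pz]
    push_cast [Nat.choose_one_right]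
    ring
  · rw [Polynomial.coeff_X_mul]
    simp only [coeff_Pz]
    have key : (m + 2 + (j+1)).choose (2*(j+1)+1) + (m + (j+1)).choose (2*(j+1)+1)
        = (m + 1 + j).choose (2*j+1) + 2 * ((m + 1 + (j+1)).choose (2*(j+1)+1)) := by
      have e1 : m + 2 + (j+1) = (m + j + 2) + 1 := by omega
      have e2 : m + 1 + (j+1) = (m + j + 1) + 1 := by omega
      have e3 : m + (j+1) = m + j + 1 := by omega
      have e4 : 2*(j+1)+1 = (2*j+2) + 1 := by omega
      rw [e1, e2, e3, e4, Nat.choose_succ_succ (m+j+2) (2*j+2),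
        Nat.choose_succ_succ (m+j+1) (2*j+1), Nat.choose_succ_succ (m+j+1) (2*j+2)]
      simp only [Nat.succ_eq_add_one, show (2*j+1+1)=2*j+2 from by omega,
        show m+1+j = m+j+1 from by omega, show m+j+1+1 = m+j+2 from rfl]
      omega
    have keyR : ((m + 2 + (j+1)).choose (2*(j+1)+1) : ℝ) + ((m + (j+1)).choose (2*(j+1)+1) : ℝ)
        = ((m + 1 + j).choose (2*j+1) : ℝ) + 2 * ((m + 1 + (j+1)).choose (2*(j+1)+1) : ℝ) := by
      exact_mod_cast congrArg (fun t : ℕ => (t : ℝ)) key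
    linarith [keyR]

noncomputable def Rz (m : ℕ) : Polynomial ℝ := (Pz m).comp (Polynomial.X - Polynomial.C 2)

lemma Rz_rec (m : ℕ) : Rz (m + 2) = Polynomial.X * Rz (m + 1) - Rz m := by
  rw [Rz, Pz_rec, Polynomial.sub_comp, Polynomial.mul_comp, Polynomial.add_comp,
    Polynomial.X_comp, Polynomial.C_comp, Rz, Rz]
  ring

lemma Pz_one : Pz 1 = Polynomial.C 1 := by
  rw [Pz]; simp

lemma Pz_two : Pz 2 = Polynomial.C 2 + Polynomial.X := by
  rw [Pz, Finset.sum_range_succ, Finset.sum_range_one]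
  norm_num

lemma Rz_one : Rz 1 = Polynomial.C 1 := by
  rw [Rz, Pz_one, Polynomial.C_comp]

lemma Rz_two : Rz 2 = Polynomial.X := by
  rw [Rz, Pz_two, Polynomial.add_comp, Polynomial.X_comp, Polynomial.C_comp]
  ring

lemma Rz_parity (n : ℕ) :
    ((∀ j, Odd j → (Rz (2*n+1)).coeff j = 0) ∧ (Rz (2*n+1)).coeff 0 = (-1:ℝ)^n)
    ∧ (∀ j, Even j → (Rz (2*n+2)).coeff j = 0) := by
  induction n with
  | zero =>
    refine ⟨⟨fun j hj => ?_, ?_⟩, fun j hj => ?_⟩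
    · rw [show 2*0+1 = 1 from rfl, Rz_one, Polynomial.coeff_C,
        if_neg (by rintro rfl; exact (Nat.not_odd_iff_even.2 Even.zero) hj)]
    · rw [show 2*0+1 = 1 from rfl, Rz_one]; simp
    · rw [show 2*0+2 = 2 from rfl, Rz_two, Polynomial.coeff_X]
      rw [if_neg (by rintro rfl; simp at hj)]
  | succ n ih =>
    obtain ⟨⟨hodd, h0⟩, heven⟩ := ih
    have e1 : 2*(n+1)+1 = (2*n+1) + 2 := by omega
    have e2 : 2*(n+1)+2 = (2*n+2) + 2 := by omega
    have hA : ∀ j, Odd j → (Rz (2*(n+1)+1)).coeff j = 0 := by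
      intro j hj
      rw [e1, Rz_rec, show 2*n+1+1 = 2*n+2 from rfl, Polynomial.coeff_sub]
      obtain ⟨i, rfl⟩ := hj
      rw [Polynomial.coeff_X_mul, heven (2*i) (even_two_mul i), hodd _ ⟨i, rfl⟩, sub_zero]
    have hA0 : (Rz (2*(n+1)+1)).coeff 0 = (-1:ℝ)^(n+1) := by
      rw [e1, Rz_rec, show 2*n+1+1 = 2*n+2 from rfl, Polynomial.coeff_sub,
        Polynomial.coeff_X_mul_zero, h0]
      ring
    refine ⟨⟨hA, hA0⟩, fun j hj => ?_⟩
    rw [e2, Rz_rec, show 2*n+2+1 = 2*(n+1)+1 from by omega, Polynomial.coeff_sub]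
    rcases j with _ | j
    · rw [Polynomial.coeff_X_mul_zero, heven 0 Even.zero, sub_zero]
    · rw [Polynomial.coeff_X_mul, hA j (by rcases hj with ⟨i, hi⟩; exact ⟨i-1, by omega⟩),
        heven _ hj, sub_zero]

lemma aeval_bernoulli (r : ℕ) (x : ℝ) :
    (Polynomial.aeval x (Polynomial.bernoulli r) : ℝ)
      = ∑ k ∈ Finset.range (r+1), (_root_.bernoulli k : ℝ) * (r.choose k) * x^(r-k) := by
  rw [Polynomial.bernoulli_def, map_sum]
  rw [← Finset.sum_range_reflect]
  refine Finset.sum_congr rfl (fun i hi => ?_)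
  rw [Finset.mem_range] at hi
  rw [Polynomial.aeval_monomial]
  have h1 : r + 1 - 1 - i = r - i := by omega
  rw [h1, Nat.sub_sub_self (by omega : i ≤ r), Nat.choose_symm (by omega : i ≤ r)]
  simp only [eq_ratCast]
  push_cast
  ring

lemma eval_Pz (m : ℕ) (x : ℝ) :
    (Pz m).eval x = ∑ s ∈ Finset.range m, ((m + s).choose (2 * s + 1) : ℝ) * x ^ s := by
  rw [Pz, Polynomial.eval_finset_sum]
  simp

lemma coeff_zero_Rz (m : ℕ) : (Rz m).coeff 0 = (Pz m).eval (-2) := by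
  rw [Polynomial.coeff_zero_eq_eval_zero, Rz, Polynomial.eval_comp]
  simp

lemma coeff_Rz (m j : ℕ) :
    (Rz m).coeff j
      = ∑ s ∈ Finset.range m, ((m + s).choose (2 * s + 1) : ℝ) * (s.choose j) * (-2)^(s-j) := by
  rw [Rz, Pz]
  have : (∑ s ∈ Finset.range m,
      Polynomial.C (((m + s).choose (2 * s + 1) : ℝ)) * Polynomial.X ^ s).comp
        (Polynomial.X - Polynomial.C 2)
      = ∑ s ∈ Finset.range m,
        Polynomial.C (((m + s).choose (2 * s + 1) : ℝ)) * (Polynomial.X + Polynomial.C (-2)) ^ s := by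
    rw [Polynomial.sum_comp]
    refine Finset.sum_congr rfl (fun s _ => ?_)
    rw [Polynomial.mul_comp, Polynomial.C_comp, Polynomial.pow_comp, Polynomial.X_comp, sub_eq_add_neg, ← Polynomial.C_neg]
  rw [this, Polynomial.finset_sum_coeff]
  refine Finset.sum_congr rfl (fun s _ => ?_)
  rw [Polynomial.coeff_C_mul, Polynomial.coeff_X_add_C_pow]
  ring

lemma sumPe (m : ℕ) :
    (Pz (m+1)).eval (-2)
      = (∑ r ∈ Finset.range (m+1), ((m + r).choose (2 * r) : ℝ) * (-2)^r)
        + (Pz m).eval (-2) := by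
  rw [eval_Pz, eval_Pz]
  have hext : (∑ s ∈ Finset.range m, ((m + s).choose (2 * s + 1) : ℝ) * (-2) ^ s)
      = ∑ s ∈ Finset.range (m+1), ((m + s).choose (2 * s + 1) : ℝ) * (-2) ^ s := by
    rw [Finset.sum_range_succ, Nat.choose_eq_zero_of_lt (by omega)]
    norm_num
  rw [hext, ← Finset.sum_add_distrib]
  refine Finset.sum_congr rfl (fun s _ => ?_)
  have : (m + 1 + s).choose (2 * s + 1) = (m+s).choose (2*s) + (m+s).choose (2*s+1) := by
    rw [show m + 1 + s = (m+s)+1 from by omega]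
    exact Nat.choose_succ_succ (m+s) (2*s)
  rw [this]
  push_cast
  ring

-- helper nat cast identity:  (m+s+1) * C(m+s, 2s+1) = C(m+s+1, 2s+2) * (2s+2)
lemma hsucc (n k : ℕ) : ((n:ℝ)+1) * (n.choose k) = ((n+1).choose (k+1)) * ((k:ℝ)+1) := by
  exact_mod_cast congrArg (fun t : ℕ => (t:ℝ)) (Nat.add_one_mul_choose_eq n k)

/-- termwise identity for k = j+1 -/
lemma term_k (m s j : ℕ) :
    ((m + (s+1)).choose (2 * (s+1)) : ℝ) * ((s+1).choose (j+1)) * (-2:ℝ)^((s+1)-(j+1)) / (m + (s+1))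
      = ((m + s).choose (2 * s + 1) : ℝ) * (s.choose j) * (-2:ℝ)^(s-j) / (2*(j+1)) := by
  have h1 := hsucc (m+s) (2*s+1)
  have h2 := hsucc s j
  have hms : ((m:ℝ) + ((s:ℝ)+1)) ≠ 0 := by positivity
  have hj1 : (2*((j:ℝ)+1)) ≠ 0 := by positivity
  have hexp : (s+1) - (j+1) = s - j := by omega
  have e2 : (2*(s+1)) = (2*s+1)+1 := by omega
  have e3 : m + (s+1) = (m+s)+1 := by omega
  rw [hexp, e2, e3]
  push_cast at h1 h2 ⊢
  rw [div_eq_div_iff (by linarith) hj1]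
  have key : ((m+s+1).choose (2*s+1+1) : ℝ) * (((s+1).choose (j+1)):ℝ) * (2*((j:ℝ)+1))
      = ((m+s).choose (2*s+1) : ℝ) * ((s.choose j):ℝ) * ((m:ℝ)+(s:ℝ)+1) := by
    apply mul_left_cancel₀ (show ((s:ℝ)+1) ≠ 0 by positivity)
    push_cast
    linear_combination (-((s.choose j : ℝ) * ((s:ℝ)+1))) * h1
      - (((m+s+1).choose (2*s+1+1) : ℝ) * (2*(s:ℝ)+2)) * h2
  push_cast at key
  linear_combination ((-2:ℝ))^(s-j) * key

lemma sum_Tk (m j : ℕ) :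
    (∑ r ∈ Finset.range (m+1),
        ((m + r).choose (2 * r) : ℝ) * (r.choose (j+1)) * (-2:ℝ)^(r-(j+1)) / (m + r))
      = (Rz m).coeff j / (2*(j+1)) := by
  rw [Finset.sum_range_succ' _ m]
  simp only [Nat.choose_zero_succ, Nat.cast_zero, mul_zero, zero_mul, zero_div, add_zero]
  rw [coeff_Rz, Finset.sum_div]
  refine Finset.sum_congr rfl (fun i _ => ?_)
  have h := term_k m i j
  push_cast at h ⊢
  linear_combination h

/-- termwise identity for k = 0, r = s+1 -/
lemma term_zero (m s : ℕ) :
    (m:ℝ) * (((m + (s+1)).choose (2 * (s+1)) : ℝ) * (-2:ℝ)^(s+1) / (m + (s+1)))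
      = ((m + (s+1)).choose (2*(s+1)) : ℝ) * (-2:ℝ)^(s+1)
        + ((m + s).choose (2 * s + 1) : ℝ) * (-2:ℝ)^s := by
  have h1 := hsucc (m+s) (2*s+1)
  have e2 : (2*(s+1)) = (2*s+1)+1 := by omega
  have e3 : m + (s+1) = (m+s)+1 := by omega
  rw [e2, e3]
  push_cast at h1 ⊢
  have hms : ((m:ℝ) + ((s:ℝ)+1)) ≠ 0 := by positivity
  field_simp
  ring_nf
  ring_nf at h1
  linear_combination (-(-2:ℝ)^s) * h1

lemma sum_T0 (m : ℕ) (hm : 0 < m) :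
    (∑ r ∈ Finset.range (m+1),
        ((m + r).choose (2 * r) : ℝ) * (-2:ℝ)^r / (m + r))
      = (Rz (m+1)).coeff 0 / m := by
  have hm' : (m:ℝ) ≠ 0 := by positivity
  have key : (m:ℝ) * (∑ r ∈ Finset.range (m+1),
      ((m + r).choose (2 * r) : ℝ) * (-2:ℝ)^r / (m + r))
      = (Rz (m+1)).coeff 0 := by
    rw [coeff_zero_Rz (m+1), sumPe, Finset.mul_sum, Finset.sum_range_succ' _ m,
      Finset.sum_range_succ' (fun r => ((m + r).choose (2 * r) : ℝ) * (-2:ℝ)^r) m,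
      eval_Pz]
    have hlast : (m:ℝ) * (((m + 0).choose (2*0) : ℝ) * (-2:ℝ)^(0:ℕ) / ((m:ℝ) + (0:ℕ))) = 1 := by
      simp [Nat.choose_zero_right]
      field_simp
    push_cast at hlast ⊢
    rw [hlast]
    have hlast2 : ((m + 0).choose (2*0) : ℝ) * (-2:ℝ)^(0:ℕ) = 1 := by
      simp [Nat.choose_zero_right]
    push_cast at hlast2
    rw [hlast2]
    have hsum : (∑ x ∈ Finset.range m, (m:ℝ) *
          (((m + (x + 1)).choose (2 * (x + 1)) : ℝ) * (-2:ℝ) ^ (x + 1) / ((m:ℝ) + ((x:ℝ) + 1))))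
        = ∑ x ∈ Finset.range m, (((m + (x + 1)).choose (2 * (x + 1)) : ℝ) * (-2:ℝ) ^ (x + 1)
            + ((m + x).choose (2 * x + 1) : ℝ) * (-2:ℝ) ^ x) := by
      refine Finset.sum_congr rfl (fun i _ => ?_)
      have h := term_zero m i
      push_cast at h ⊢
      linear_combination h
    rw [hsum, Finset.sum_add_distrib]
    ring
  rw [eq_div_iff hm']
  linear_combination key

theorem zagierBstarPoly_odd_at_neg_two (n : ℕ) :
    zagierBstarPoly (2 * n + 1) (-2) = (-1 : ℝ) ^ (n + 1) / 4 := by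
  set m := 2 * n + 1 with hm
  have hswap : zagierBstarPoly m (-2)
      = ∑ k ∈ Finset.range (m+1), (_root_.bernoulli k : ℝ) *
          (∑ r ∈ Finset.range (m+1),
            ((m + r).choose (2 * r) : ℝ) * (r.choose k) * (-2:ℝ)^(r-k) / (m + r)) := by
    rw [zagierBstarPoly]
    have h1 : ∀ r ∈ Finset.range (m+1),
        ((m + r).choose (2 * r) : ℝ) * (Polynomial.aeval (-2:ℝ) (Polynomial.bernoulli r)) / (m + r)
        = ∑ k ∈ Finset.range (m+1), (_root_.bernoulli k : ℝ) *
            (((m + r).choose (2 * r) : ℝ) * (r.choose k) * (-2:ℝ)^(r-k) / (m + r)) := by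
      intro r hr
      rw [Finset.mem_range] at hr
      rw [aeval_bernoulli, Finset.mul_sum, Finset.sum_div]
      have hvan : ∀ k ∈ Finset.range (m+1), k ∉ Finset.range (r+1) →
          ((m + r).choose (2 * r) : ℝ) * ((_root_.bernoulli k : ℝ) * (r.choose k) * (-2:ℝ)^(r-k)) / (m + r) = 0 := by
        intro k _ hk
        rw [Finset.mem_range, not_lt] at hk
        rw [Nat.choose_eq_zero_of_lt (show r < k from by omega)]
        simp
      rw [Finset.sum_subset (Finset.range_subset_range.2 (by omega : r+1 ≤ m+1)) hvan]
      exact Finset.sum_congr rfl (fun k _ => by ring)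
    rw [Finset.sum_congr rfl h1, Finset.sum_comm]
    exact Finset.sum_congr rfl (fun k _ => by rw [Finset.mul_sum])
  rw [hswap]
  rw [← Finset.sum_range_add_sum_Ico _ (show 2 ≤ m+1 by omega)]
  have hIco : ∑ k ∈ Finset.Ico 2 (m+1), (_root_.bernoulli k : ℝ) *
      (∑ r ∈ Finset.range (m+1),
        ((m + r).choose (2 * r) : ℝ) * (r.choose k) * (-2:ℝ)^(r-k) / (m + r)) = 0 := by
    refine Finset.sum_eq_zero (fun k hk => ?_)
    rw [Finset.mem_Ico] at hk
    rcases Nat.even_or_odd k with he | ho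
    · -- k even ≥ 2, k = j+1 with j odd
      obtain ⟨j, rfl⟩ : ∃ j, k = j + 1 := ⟨k-1, by omega⟩
      rw [sum_Tk m j, ((Rz_parity n).1).1 j (by
        rcases he with ⟨i, hi⟩; exact ⟨i-1, by omega⟩)]
      simp
    · have : _root_.bernoulli k = 0 := by
        rw [bernoulli_eq_bernoulli'_of_ne_one (by omega)]
        exact bernoulli'_eq_zero_of_odd ho (by omega)
      rw [this]
      simp
  rw [hIco, add_zero, Finset.sum_range_succ, Finset.sum_range_one]
  have h0 : (∑ r ∈ Finset.range (m+1),
      ((m + r).choose (2 * r) : ℝ) * (r.choose 0) * (-2:ℝ)^(r-0) / (m + r)) = 0 := by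
    have : (∑ r ∈ Finset.range (m+1),
        ((m + r).choose (2 * r) : ℝ) * (r.choose 0) * (-2:ℝ)^(r-0) / (m + r))
        = ∑ r ∈ Finset.range (m+1), ((m + r).choose (2 * r) : ℝ) * (-2:ℝ)^r / (m + r) := by
      refine Finset.sum_congr rfl (fun r _ => ?_)
      simp
    rw [this, sum_T0 m (by omega), show m + 1 = 2*n+2 from by omega,
      (Rz_parity n).2 0 Even.zero]
    simp
  have h1v : (∑ r ∈ Finset.range (m+1),
      ((m + r).choose (2 * r) : ℝ) * (r.choose 1) * (-2:ℝ)^(r-1) / (m + r))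
      = (-1:ℝ)^n / 2 := by
    have hT := sum_Tk m 0
    simp only [zero_add] at hT
    rw [hT, ((Rz_parity n).1).2]
    norm_num
  rw [h0, h1v]
  rw [_root_.bernoulli_one]
  push_cast
  ring
end

section
/- Let b be a real number. There exists a rational function R with real coefficients such that ψ(t + b) - ψ(t) = R(t) for all t > max(0, -b) if and only if b is an integer. -/
open Polynomial

/-- The digamma function `ψ = (log ∘ Γ)'`. -/
noncomputable def digamma (x : ℝ) : ℝ :=
  deriv (fun t : ℝ => Real.log (Real.Gamma t)) x

lemma digamma_add_one {t : ℝ} (ht : 0 < t) : digamma (t + 1) = digamma t + 1 / t := by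
  have hev : (fun s : ℝ => Real.log (Real.Gamma (s + 1)))
      =ᶠ[nhds t] (fun s : ℝ => Real.log s + Real.log (Real.Gamma s)) := by
    filter_upwards [eventually_gt_nhds ht] with s hs
    rw [Real.Gamma_add_one hs.ne', Real.log_mul hs.ne' (Real.Gamma_pos_of_pos hs).ne']
  have h1 : deriv (fun s : ℝ => Real.log (Real.Gamma (s + 1))) t = digamma (t + 1) := by
    exact deriv_comp_add_const (fun s : ℝ => Real.log (Real.Gamma s)) 1 t
  have hdg : DifferentiableAt ℝ (fun s : ℝ => Real.log (Real.Gamma s)) t := by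
    apply DifferentiableAt.log (Real.differentiableAt_Gamma ?_) (Real.Gamma_pos_of_pos ht).ne'
    intro m
    have : (0:ℝ) ≤ m := Nat.cast_nonneg m
    intro h; rw [h] at ht; linarith
  have h2 : deriv (fun s : ℝ => Real.log s + Real.log (Real.Gamma s)) t
      = 1 / t + digamma t := by
    rw [deriv_fun_add (Real.differentiableAt_log ht.ne') hdg, Real.deriv_log, one_div]
    rfl
  rw [← h1, hev.deriv_eq, h2, add_comm]

lemma digamma_shift_nat (n : ℕ) : ∃ p q : Polynomial ℝ,
    (∀ t : ℝ, 0 < t → q.eval t ≠ 0) ∧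
    ∀ t : ℝ, 0 < t → digamma (t + n) - digamma t = p.eval t / q.eval t := by
  induction n with
  | zero => exact ⟨0, 1, fun t _ => by simp, fun t _ => by simp⟩
  | succ n ih =>
    obtain ⟨p, q, hq, h⟩ := ih
    refine ⟨q + (X + C (n : ℝ)) * p, (X + C (n : ℝ)) * q, fun t ht => ?_, fun t ht => ?_⟩
    · have h1 : t + n > 0 := by positivity
      simp only [eval_mul, eval_add, eval_X, eval_C]
      exact mul_ne_zero h1.ne' (hq t ht)
    · have h1 : (0:ℝ) < t + n := by positivity
      have h2 : digamma (t + (n+1:ℕ)) = digamma (t + n) + 1 / (t + n) := by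
        have := digamma_add_one h1
        rw [← this]; norm_num [add_assoc]
      rw [h2]
      have h3 := h t ht
      simp only [eval_mul, eval_add, eval_X, eval_C]
      have hqt := hq t ht
      rw [show digamma (t + (n:ℝ)) + 1 / (t + (n:ℝ)) - digamma t
        = (digamma (t + (n:ℝ)) - digamma t) + 1 / (t + (n:ℝ)) by ring, h3]
      field_simp
      ring
lemma reverse_dir (b : ℝ) (m : ℤ) (hb : b = m) :
    ∃ p q : Polynomial ℝ, q ≠ 0 ∧
        ∀ t : ℝ, max 0 (-b) < t → digamma (t + b) - digamma t = p.eval t / q.eval t := by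
  rcases le_or_gt 0 b with hb0 | hb0
  · obtain ⟨n, hn⟩ : ∃ n : ℕ, b = n := by
      refine ⟨m.toNat, ?_⟩
      have h0 : 0 ≤ m := by exact_mod_cast hb ▸ hb0
      rw [hb]; norm_cast; omega
    obtain ⟨p, q, hq, h⟩ := digamma_shift_nat n
    refine ⟨p, q, fun h0 => hq 1 one_pos (by rw [h0]; simp), fun t ht => ?_⟩
    have ht0 : 0 < t := lt_of_le_of_lt (le_max_left _ _) ht
    rw [hn]; exact h t ht0
  · obtain ⟨n, hn⟩ : ∃ n : ℕ, b = -(n:ℝ) := by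
      refine ⟨(-m).toNat, ?_⟩
      have h1 : (m:ℝ) < 0 := hb ▸ hb0
      have h2 : m < 0 := by exact_mod_cast h1
      rw [hb]; exact_mod_cast (by omega : m = -(((-m).toNat : ℤ)))
    obtain ⟨p, q, hq, h⟩ := digamma_shift_nat n
    refine ⟨-(p.comp (X - C (n:ℝ))), q.comp (X - C (n:ℝ)), fun h0 => ?_, fun t ht => ?_⟩
    · have := hq 1 one_pos
      apply this
      have : eval ((n:ℝ)+1) (q.comp (X - C (n:ℝ))) = eval 1 q := by
        simp [eval_comp]
      rw [h0] at this; simpa using this.symm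
    · have htn : (n:ℝ) < t := by
        have : -b ≤ max 0 (-b) := le_max_right _ _
        have := lt_of_le_of_lt this ht
        rw [hn] at this; simpa using this
      have ht0 : 0 < t - n := by linarith
      have := h (t - n) ht0
      rw [hn]
      have hkey : digamma (t + -(n:ℝ)) - digamma t = -(digamma ((t - n) + n) - digamma (t - n)) := by
        rw [show (t - (n:ℝ)) + n = t by ring]; ring_nf
      rw [hkey, this]
      simp only [eval_neg, eval_comp, eval_sub, eval_X, eval_C]
      rw [neg_div]

lemma forward_dir (b : ℝ) (p q : Polynomial ℝ) (hq : q ≠ 0)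
    (h : ∀ t : ℝ, max 0 (-b) < t → digamma (t + b) - digamma t = p.eval t / q.eval t) :
    ∃ m : ℤ, b = m := by
  classical
  set M := max 0 (-b) with hM
  -- pointwise functional equation
  have key : ∀ t : ℝ, M < t → q.eval t ≠ 0 → q.eval (t+1) ≠ 0 →
      (p.eval (t+1) * q.eval t - p.eval t * q.eval (t+1)) * (t * (t + b))
        = -b * (q.eval t * q.eval (t+1)) := by
    intro t ht hq0 hq1
    have ht0 : 0 < t := lt_of_le_of_lt (le_max_left _ _) ht
    have htb : 0 < t + b := by
      have : -b < t := lt_of_le_of_lt (le_max_right _ _) ht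
      linarith
    have e1 := h t ht
    have e2 := h (t+1) (lt_trans ht (by linarith))
    have r1 : digamma (t+1) = digamma t + 1/t := digamma_add_one ht0
    have r2 : digamma (t+1+b) = digamma (t+b) + 1/(t+b) := by
      have := digamma_add_one htb
      rw [show t+b+1 = t+1+b by ring] at this; exact this
    rw [r2, r1] at e2
    have e3 : p.eval (t+1)/q.eval (t+1) - p.eval t/q.eval t = 1/(t+b) - 1/t := by
      rw [← e1, ← e2]; ring
    field_simp at e3
    linear_combination e3
  -- polynomial identity over ℝ
  have hAB : (p.comp (X+1) * q - p * q.comp (X+1)) * (X * (X + C b))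
      = (- C b) * (q * q.comp (X+1)) := by
    rw [← sub_eq_zero]
    apply eq_zero_of_infinite_isRoot
    have hfin : ({x : ℝ | IsRoot q x} ∪ (fun x : ℝ => x + 1) ⁻¹' {x : ℝ | IsRoot q x}).Finite :=
      (finite_setOf_isRoot hq).union ((finite_setOf_isRoot hq).preimage
        (Set.injOn_of_injective (add_left_injective (1:ℝ))))
    apply Set.Infinite.mono (s := Set.Ioi M \ ({x : ℝ | IsRoot q x} ∪ (fun x : ℝ => x + 1) ⁻¹' {x : ℝ | IsRoot q x}))
    · intro t ht
      obtain ⟨ht1, ht2⟩ := ht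
      simp only [Set.mem_union, Set.mem_preimage, Set.mem_setOf_eq, not_or] at ht2
      have := key t ht1 ht2.1 ht2.2
      simp only [Set.mem_setOf_eq, IsRoot, eval_sub, eval_mul, eval_add, eval_comp, eval_X, eval_C, eval_neg, eval_one]
      linear_combination this
    · exact (Set.Ioi_infinite M).diff hfin
  -- map to ℂ
  set f := algebraMap ℝ ℂ
  set pc := p.map f with hpc
  set qc := q.map f with hqc
  have hqc0 : qc ≠ 0 := by
    simpa [hqc] using (Polynomial.map_ne_zero hq : q.map f ≠ 0)
  have hABc : (pc.comp (X+1) * qc - pc * qc.comp (X+1)) * (X * (X + C (b:ℂ)))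
      = (- C (b:ℂ)) * (qc * qc.comp (X+1)) := by
    have := congrArg (Polynomial.map f) hAB
    have hfb : f b = (b:ℂ) := rfl
    simpa [Polynomial.map_comp, Polynomial.map_mul, Polynomial.map_sub, Polynomial.map_add,
      Polynomial.map_one, Polynomial.map_neg, Polynomial.map_X, Polynomial.map_C, hfb] using this
  -- reduce to coprime fraction over ℂ
  set g := EuclideanDomain.gcd pc qc with hgdef
  have hg : g ≠ 0 := by
    intro h0
    exact hqc0 (EuclideanDomain.gcd_eq_zero_iff.mp h0).2
  obtain ⟨P, hP⟩ : g ∣ pc := EuclideanDomain.gcd_dvd_left pc qc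
  obtain ⟨Q, hQ⟩ : g ∣ qc := EuclideanDomain.gcd_dvd_right pc qc
  have hQ0 : Q ≠ 0 := by
    rintro rfl; rw [mul_zero] at hQ; exact hqc0 hQ
  have hg1 : g.comp (X+1) ≠ 0 := by
    intro h0
    have : (g.comp (X+1)).comp (X - C 1) = g := by
      rw [comp_assoc]
      simp
    rw [h0, zero_comp] at this
    exact hg this.symm
  -- no common root
  have hnocr : ∀ c : ℂ, Q.eval c = 0 → P.eval c ≠ 0 := by
    intro c hQc hPc
    have hdP : g * (X - C c) ∣ pc := by
      rw [hP]; exact mul_dvd_mul_left g (dvd_iff_isRoot.mpr hPc)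
    have hdQ : g * (X - C c) ∣ qc := by
      rw [hQ]; exact mul_dvd_mul_left g (dvd_iff_isRoot.mpr hQc)
    have hdg : g * (X - C c) ∣ g := EuclideanDomain.dvd_gcd hdP hdQ
    obtain ⟨u, hu⟩ := hdg
    have h1 : g * 1 = g * ((X - C c) * u) := by nth_rewrite 1 [hu]; ring
    have h2 : (1:ℂ[X]) = (X - C c) * u := mul_left_cancel₀ hg h1
    exact Polynomial.not_isUnit_X_sub_C c (isUnit_iff_exists_inv.mpr ⟨u, h2.symm⟩)
  -- identity for the coprime pair
  have hI : (P.comp (X+1) * Q - P * Q.comp (X+1)) * (X * (X + C (b:ℂ)))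
      = (- C (b:ℂ)) * (Q * Q.comp (X+1)) := by
    apply mul_left_cancel₀ (mul_ne_zero hg hg1)
    rw [hP, hQ] at hABc
    simp only [mul_comp] at hABc
    linear_combination hABc
  have evalI : ∀ c : ℂ, (P.eval (c+1) * Q.eval c - P.eval c * Q.eval (c+1)) * (c * (c + b))
      = (-(b:ℂ)) * (Q.eval c * Q.eval (c+1)) := by
    intro c
    have := congrArg (eval c) hI
    simpa [eval_comp] using this
  by_cases hroot : ∃ c : ℂ, Q.eval c = 0
  · obtain ⟨c₀, hc₀⟩ := hroot
    have hup : ∃ n : ℕ, Q.eval (c₀ + n) = 0 ∧ Q.eval (c₀ + n + 1) ≠ 0 := by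
      by_contra hcon
      push_neg at hcon
      have hall : ∀ n : ℕ, Q.eval (c₀ + n) = 0 := by
        intro n
        induction n with
        | zero => simpa using hc₀
        | succ n ih =>
          have := hcon n ih
          rw [show (c₀ + (n+1:ℕ) : ℂ) = c₀ + n + 1 by push_cast; ring]
          exact this
      have hinj : Function.Injective (fun n : ℕ => c₀ + (n:ℂ)) := by
        intro a b' hab
        simp only at hab
        exact_mod_cast add_left_cancel hab
      exact Set.infinite_of_injective_forall_mem hinj (fun n => hall n)
        (finite_setOf_isRoot hQ0)
    have hdown : ∃ k : ℕ, Q.eval (c₀ - k) = 0 ∧ Q.eval (c₀ - k - 1) ≠ 0 := by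
      by_contra hcon
      push_neg at hcon
      have hall : ∀ k : ℕ, Q.eval (c₀ - k) = 0 := by
        intro k
        induction k with
        | zero => simpa using hc₀
        | succ k ih =>
          have := hcon k ih
          rw [show (c₀ - (k+1:ℕ) : ℂ) = c₀ - k - 1 by push_cast; ring]
          exact this
      have hinj : Function.Injective (fun k : ℕ => c₀ - (k:ℂ)) := by
        intro a b' hab
        simp only at hab
        have : (a:ℂ) = b' := by linear_combination -hab
        exact_mod_cast this
      exact Set.infinite_of_injective_forall_mem hinj (fun k => hall k)
        (finite_setOf_isRoot hQ0)
    obtain ⟨n, hn0, hn1⟩ := hup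
    obtain ⟨k, hk0, hk1⟩ := hdown
    -- top endpoint
    have htop : (c₀ + n) = 0 ∨ (c₀ + n) + (b:ℂ) = 0 := by
      have := evalI (c₀ + n)
      rw [hn0] at this
      simp only [mul_zero, zero_mul, zero_sub, mul_zero] at this
      have h2 : P.eval (c₀+n) * Q.eval (c₀+n+1) * ((c₀+n) * ((c₀+n) + b)) = 0 := by
        linear_combination -this
      rcases mul_eq_zero.mp h2 with h3 | h3
      · rcases mul_eq_zero.mp h3 with h4 | h4
        · exact absurd h4 (hnocr _ hn0)
        · exact absurd h4 hn1
      · rcases mul_eq_zero.mp h3 with h4 | h4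
        · exact Or.inl h4
        · exact Or.inr h4
    -- bottom endpoint
    have hbot : (c₀ - k - 1) = 0 ∨ (c₀ - k - 1) + (b:ℂ) = 0 := by
      have := evalI (c₀ - k - 1)
      rw [show (c₀ - k - 1 + 1 : ℂ) = c₀ - k by ring, hk0] at this
      have h2 : P.eval (c₀-k) * Q.eval (c₀-k-1) * ((c₀-k-1) * ((c₀-k-1) + b)) = 0 := by
        linear_combination this
      rcases mul_eq_zero.mp h2 with h3 | h3
      · rcases mul_eq_zero.mp h3 with h4 | h4
        · exact absurd h4 (hnocr _ hk0)
        · exact absurd h4 hk1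
      · rcases mul_eq_zero.mp h3 with h4 | h4
        · exact Or.inl h4
        · exact Or.inr h4
    rcases htop with ht1 | ht1 <;> rcases hbot with hb1 | hb1
    · -- c₀+n = 0 and c₀-k-1 = 0 : impossible
      exfalso
      have : ((n + k + 1 : ℕ) : ℂ) = 0 := by push_cast; linear_combination ht1 - hb1
      have : n + k + 1 = 0 := by exact_mod_cast this
      omega
    · -- c₀+n = 0, c₀-k-1 = -b : b = n+k+1
      refine ⟨(n:ℤ) + k + 1, ?_⟩
      have : (b:ℂ) = ((n + k + 1 : ℕ) : ℂ) := by push_cast; linear_combination hb1 - ht1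
      have : b = ((n + k + 1 : ℕ) : ℝ) := by exact_mod_cast this
      rw [this]; push_cast; ring
    · -- c₀+n = -b, c₀-k-1 = 0 : b = -(n+k+1)
      refine ⟨-((n:ℤ) + k + 1), ?_⟩
      have : (b:ℂ) = -((n + k + 1 : ℕ) : ℂ) := by push_cast; linear_combination ht1 - hb1
      have : b = -((n + k + 1 : ℕ) : ℝ) := by exact_mod_cast this
      rw [this]; push_cast; ring
    · -- both = -b : impossible
      exfalso
      have : ((n + k + 1 : ℕ) : ℂ) = 0 := by push_cast; linear_combination ht1 - hb1
      have : n + k + 1 = 0 := by exact_mod_cast this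
      omega
  · push_neg at hroot
    have := evalI 0
    simp only [zero_add, zero_mul, mul_zero] at this
    rcases mul_eq_zero.mp this.symm with h1 | h1
    · exact ⟨0, by exact_mod_cast (by simpa using h1 : (b:ℂ) = 0)⟩
    · exact absurd h1 (mul_ne_zero (hroot 0) (hroot 1))

theorem digamma_shift_rational_iff (b : ℝ) :
    (∃ p q : Polynomial ℝ, q ≠ 0 ∧
        ∀ t : ℝ, max 0 (-b) < t → digamma (t + b) - digamma t = p.eval t / q.eval t)
      ↔ ∃ m : ℤ, b = m := by
  constructor
  · rintro ⟨p, q, hq, h⟩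
    exact forward_dir b p q hq h
  · rintro ⟨m, hb⟩
    exact reverse_dir b m hb
end
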